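/- For all integers n ≥ 2 and i ≥ 1, the Pell–Lucas numbers satisfy Q_{ni+i} = Q_i^{n−1} · Q_{2i} − (−1)^i · Σ_{j=1}^{n−1} Q_i^{n−1−j} · Q_{ij}. -/

import Mathlib

lemma pellLucas_key (Q : ℕ → ℤ)
    (hQ0 : Q 0 = 2) (hQ1 : Q 1 = 2)
    (hQ : ∀ n : ℕ, Q (n + 2) = 2 * Q (n + 1) + Q n) :
    ∀ i k : ℕ, Q (k + 2 * i) + (-1 : ℤ) ^ i * Q k = Q i * Q (k + i) := by
  intro i
  induction i using Nat.twoStepInduction with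
  | zero => intro k; simp [hQ0]; ring
  | one =>
      intro k
      have h := hQ k
      have e : k + 2 * 1 = k + 2 := by ring
      rw [e, h, hQ1]; ring
  | more i ih1 ih2 =>
      intro k
      have h1 := ih1 (k + 2)
      have h2 := ih2 (k + 1)
      have e1 : k + 2 + 2 * i = k + 2 * i + 2 := by ring
      have e2 : k + 1 + 2 * (i + 1) = k + 2 * i + 3 := by ring
      have e3 : k + 2 + i = k + (i + 2) := by ring
      have e4 : k + 1 + (i + 1) = k + (i + 2) := by ring
      rw [e1, e3] at h1
      rw [e2, e4] at h2
      have r1 := hQ k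
      have r2 := hQ (k + 2 * i + 2)
      have rQ := hQ i
      have e5 : k + 2 * (i + 2) = k + 2 * i + 2 + 2 := by ring
      rw [e5, r2, rQ]
      have ps : (-1 : ℤ) ^ (i + 2) = (-1) ^ i := by ring
      have ps1 : (-1 : ℤ) ^ (i + 1) = -(-1) ^ i := by ring
      rw [ps]
      rw [ps1] at h2
      linear_combination 2 * h2 + h1 - (-1 : ℤ) ^ i * r1

/-- Pell–Lucas: Q_{ni+i} = Q_i^{n−1} · Q_{2i} − (−1)^i · Σ_{j=1}^{n−1} Q_i^{n−1−j} · Q_{ij}. -/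
theorem pellLucas_sum (Q : ℕ → ℤ)
    (hQ0 : Q 0 = 2) (hQ1 : Q 1 = 2)
    (hQ : ∀ n : ℕ, Q (n + 2) = 2 * Q (n + 1) + Q n)
    (n i : ℕ) (hn : 2 ≤ n) (hi : 1 ≤ i) :
    Q (n * i + i) = Q i ^ (n - 1) * Q (2 * i) -
      (-1 : ℤ) ^ i * ∑ j ∈ Finset.Icc 1 (n - 1), Q i ^ (n - 1 - j) * Q (i * j) := by
  induction n, hn using Nat.le_induction with
  | base =>
      have h := pellLucas_key Q hQ0 hQ1 hQ i i
      have e : i + 2 * i = 2 * i + i := by ring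
      have e2 : i + i = 2 * i := by ring
      rw [e, e2] at h
      simp only [show (2:ℕ) - 1 = 1 from rfl, Finset.Icc_self, Finset.sum_singleton,
        mul_one, pow_one, Nat.sub_self, pow_zero, one_mul]
      linarith [h]
  | succ n hn ih =>
      have h := pellLucas_key Q hQ0 hQ1 hQ i (n * i)
      have e : n * i + 2 * i = (n + 1) * i + i := by ring
      rw [e] at h
      -- Q ((n+1)*i + i) = Q i * Q (n*i + i) - (-1)^i * Q (n*i)
      have step : Q ((n + 1) * i + i) = Q i * Q (n * i + i) - (-1 : ℤ) ^ i * Q (n * i) := by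
        linarith [h]
      rw [step, ih]
      have hn1 : n - 1 + 1 = n := by omega
      have esum : ∑ j ∈ Finset.Icc 1 (n + 1 - 1), Q i ^ (n + 1 - 1 - j) * Q (i * j)
          = (∑ j ∈ Finset.Icc 1 (n - 1), Q i ^ (n - j) * Q (i * j)) + Q (i * n) := by
        have : (n + 1 - 1 : ℕ) = (n - 1) + 1 := by omega
        rw [this, Finset.sum_Icc_succ_top (by omega : 1 ≤ n - 1 + 1), hn1]
        simp
      rw [esum]
      have efac : ∑ j ∈ Finset.Icc 1 (n - 1), Q i ^ (n - j) * Q (i * j)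
          = Q i * ∑ j ∈ Finset.Icc 1 (n - 1), Q i ^ (n - 1 - j) * Q (i * j) := by
        rw [Finset.mul_sum]
        apply Finset.sum_congr rfl
        intro j hj
        simp only [Finset.mem_Icc] at hj
        have : n - j = (n - 1 - j) + 1 := by omega
        rw [this, pow_succ]
        ring
      rw [efac]
      have epow : Q i ^ (n + 1 - 1) = Q i * Q i ^ (n - 1) := by
        rw [show n + 1 - 1 = (n - 1) + 1 by omega, pow_succ]; ring
      rw [epow, show i * n = n * i by ring]
      ring
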